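/- Let f₁, g₁ be continuous on [a,b] and let z be the solution of the complex Riccati equation z' + f₁(t)z² + g₁(t) = 0 with z(a) = i. Then z exists on all of [a,b], the imaginary part y(t) = Im z(t) is strictly positive on [a,b], and every nontrivial solution (φ, ψ) of the system φ' = f₁ψ, ψ' = -g₁φ satisfies φ(t) = (μ/√y(t)) · sin(∫_a^t f₁(τ)y(τ)dτ + θ) for some real constants μ ≠ 0 and θ. -/

import Mathlib

open Set intervalIntegral

section exist

variable {E : Type*} [NormedAddCommGroup E] [NormedSpace ℝ E] [CompleteSpace E]

/-- Short-time Picard–Lindelöf step for a linearly bounded field. -/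
lemma linear_pl_step (V : ℝ → E → E) (K : ℝ) (hK : 0 ≤ K)
    (hlip : ∀ t, LipschitzWith K.toNNReal (V t))
    (hct : ∀ x, Continuous fun t => V t x)
    (hzero : ∀ t, V t 0 = 0)
    (c : ℝ) (x₀ : E) :
    ∃ x : ℝ → E, x c = x₀ ∧ ∀ t ∈ Icc c (c + (2*K+2)⁻¹),
      HasDerivWithinAt x (V t (x t)) (Icc c (c + (2*K+2)⁻¹)) t := by
  have hε : (0:ℝ) < (2*K+2)⁻¹ := by positivity
  have hpl : IsPicardLindelof V (tmin := c) (tmax := c + (2*K+2)⁻¹) ⟨c, le_refl c, by linarith⟩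
      x₀ (‖x₀‖₊ + 1) 0 (K.toNNReal * (2*‖x₀‖₊+1)) K.toNNReal := by
    constructor
    · exact fun t _ => (hlip t).lipschitzOnWith
    · exact fun x _ => (hct x).continuousOn
    · intro t _ x hx
      have h1 : ‖V t x‖ ≤ K * ‖x‖ := by
        have := (hlip t).dist_le_mul x 0
        simpa [hzero t, dist_eq_norm, Real.coe_toNNReal _ hK] using this
      have h2 : ‖x‖ ≤ 2*‖x₀‖ + 1 := by
        have := mem_closedBall_iff_norm.mp hx
        push_cast at this
        have h3 : ‖x‖ ≤ ‖x - x₀‖ + ‖x₀‖ := by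
          simpa using norm_add_le (x - x₀) x₀
        linarith
      calc ‖V t x‖ ≤ K * ‖x‖ := h1
        _ ≤ K * (2*‖x₀‖+1) := by nlinarith [norm_nonneg x]
        _ = _ := by push_cast [Real.coe_toNNReal _ hK]; ring
    · have hm : max (c + (2*K+2)⁻¹ - c) (c - c) = (2*K+2)⁻¹ := by
        rw [max_eq_left] <;> simp [hε.le]
      simp only [tsub_zero]
      push_cast [Real.coe_toNNReal _ hK]
      rw [hm]
      have hN : (0:ℝ) ≤ ‖x₀‖ := norm_nonneg _
      rw [inv_eq_one_div, mul_one_div, div_le_iff₀ (by linarith : (0:ℝ) < 2*K+2)]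
      nlinarith
  exact hpl.exists_eq_forall_mem_Icc_hasDerivWithinAt₀

/-- Glue two solutions on adjacent intervals. -/
lemma glue_step (V : ℝ → E → E) {x y : ℝ → E} {c d e : ℝ} (hcd : c ≤ d) (hde : d ≤ e)
    (hx : ∀ t ∈ Icc c d, HasDerivWithinAt x (V t (x t)) (Icc c d) t)
    (hy : ∀ t ∈ Icc d e, HasDerivWithinAt y (V t (y t)) (Icc d e) t)
    (hxy : x d = y d) :
    ∃ X : ℝ → E, (∀ s, s ≤ d → X s = x s) ∧
      ∀ t ∈ Icc c e, HasDerivWithinAt X (V t (X t)) (Icc c e) t := by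
  refine ⟨fun s => if s ≤ d then x s else y s, fun s hs => if_pos hs, ?_⟩
  intro t ht
  set X : ℝ → E := fun s => if s ≤ d then x s else y s with hX
  have hXx : ∀ s ∈ Icc c d, X s = x s := fun s hs => if_pos hs.2
  have hXy : ∀ s ∈ Icc d e, X s = y s := by
    intro s hs
    by_cases h : s ≤ d
    · have : s = d := le_antisymm h hs.1
      simp [hX, this, hxy]
    · simp [hX, h]
  have h1 : HasDerivWithinAt X (V t (X t)) (Icc c d) t := by
    by_cases htd : t ≤ d
    · have htm : t ∈ Icc c d := ⟨ht.1, htd⟩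
      have := (hx t htm).congr hXx (hXx t htm)
      rwa [← hXx t htm] at this
    · rw [hasDerivWithinAt_iff_hasFDerivWithinAt]
      apply HasFDerivWithinAt.of_notMem_closure
      rw [isClosed_Icc.closure_eq]
      exact fun hmem => htd hmem.2
  have h2 : HasDerivWithinAt X (V t (X t)) (Icc d e) t := by
    by_cases htd : d ≤ t
    · have htm : t ∈ Icc d e := ⟨htd, ht.2⟩
      have := (hy t htm).congr hXy (hXy t htm)
      rwa [← hXy t htm] at this
    · rw [hasDerivWithinAt_iff_hasFDerivWithinAt]
      apply HasFDerivWithinAt.of_notMem_closure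
      rw [isClosed_Icc.closure_eq]
      exact fun hmem => htd hmem.1
  have := h1.union h2
  rwa [Icc_union_Icc_eq_Icc hcd hde] at this

lemma linear_ode_forward (V : ℝ → E → E) (K : ℝ) (hK : 0 ≤ K)
    (hlip : ∀ t, LipschitzWith K.toNNReal (V t))
    (hct : ∀ x, Continuous fun t => V t x)
    (hzero : ∀ t, V t 0 = 0)
    (a : ℝ) (x₀ : E) (n : ℕ) :
    ∃ x : ℝ → E, x a = x₀ ∧ ∀ t ∈ Icc a (a + (n+1) * (2*K+2)⁻¹),
      HasDerivWithinAt x (V t (x t)) (Icc a (a + (n+1) * (2*K+2)⁻¹)) t := by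
  have hε : (0:ℝ) < (2*K+2)⁻¹ := by positivity
  induction n with
  | zero =>
    obtain ⟨x, hx0, hx⟩ := linear_pl_step V K hK hlip hct hzero a x₀
    exact ⟨x, hx0, by simpa using hx⟩
  | succ n ih =>
    obtain ⟨x, hx0, hx⟩ := ih
    set d : ℝ := a + (n+1) * (2*K+2)⁻¹ with hd
    obtain ⟨y, hy0, hy⟩ := linear_pl_step V K hK hlip hct hzero d (x d)
    have had : a ≤ d := by rw [hd]; nlinarith
    obtain ⟨X, hX1, hX2⟩ := glue_step V (e := d + (2*K+2)⁻¹) had (by linarith) hx hy hy0.symm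
    refine ⟨X, by rw [hX1 a had, hx0], ?_⟩
    have hde : a + (↑(n+1)+1) * (2*K+2)⁻¹ = d + (2*K+2)⁻¹ := by rw [hd]; push_cast; ring
    rw [hde]
    exact hX2

/-- Global existence for a (sub)linear ODE, with genuine two-sided derivatives on `[a,b]`. -/
lemma linear_ode_exists (V : ℝ → E → E) (K : ℝ) (hK : 0 ≤ K)
    (hlip : ∀ t, LipschitzWith K.toNNReal (V t))
    (hct : ∀ x, Continuous fun t => V t x)
    (hzero : ∀ t, V t 0 = 0)
    (a b : ℝ) (hab : a < b) (x₀ : E) :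
    ∃ x : ℝ → E, x a = x₀ ∧ ∀ t ∈ Icc a b, HasDerivAt x (V t (x t)) t := by
  have hε : (0:ℝ) < (2*K+2)⁻¹ := by positivity
  obtain ⟨n, hn⟩ := exists_nat_gt ((b - a) / (2*K+2)⁻¹)
  have hB : b < a + (n+1) * (2*K+2)⁻¹ := by
    rw [div_lt_iff₀ hε] at hn
    nlinarith
  obtain ⟨X, hX0, hX⟩ := linear_ode_forward V K hK hlip hct hzero a x₀ n
  set B : ℝ := a + (n+1) * (2*K+2)⁻¹ with hBdef
  set x : ℝ → E := fun s => if s < a then x₀ + (s - a) • V a x₀ else X s with hxdef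
  have hxX : ∀ s, a ≤ s → x s = X s := fun s hs => if_neg (not_lt.mpr hs)
  refine ⟨x, by rw [hxX a le_rfl, hX0], ?_⟩
  intro t ht
  rcases eq_or_lt_of_le ht.1 with rfl | hat
  · -- t = a : combine left linear extension with right solution
    have hval : x a = x₀ := by rw [hxX a le_rfl, hX0]
    rw [hval]
    rw [← hasDerivWithinAt_univ, ← Iic_union_Ici (a := a)]
    apply HasDerivWithinAt.union
    · have hL : HasDerivAt (fun s : ℝ => x₀ + (s - a) • V a x₀) (V a x₀) a := by
        have h1 : HasDerivAt (fun s : ℝ => s - a) 1 a := (hasDerivAt_id a).sub_const a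
        have h2 := (h1.smul_const (V a x₀)).const_add x₀
        simpa using h2
      apply hL.hasDerivWithinAt.congr
      · intro s hs
        rcases eq_or_lt_of_le (mem_Iic.mp hs) with rfl | hsa
        · simp [hxX s le_rfl, hX0]
        · simp [hxdef, hsa]
      · simpa using hval
    · have hmem : Icc a B ∈ nhdsWithin a (Ici a) :=
        Icc_mem_nhdsGE (by linarith)
      have := (hX a ⟨le_rfl, by linarith⟩).mono_of_mem_nhdsWithin hmem
      rw [hX0] at this
      exact this.congr (fun s hs => hxX s hs) (by rw [hxX a le_rfl, hX0])
  · -- a < t : x = X near t and X has two-sided derivative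
    have hmem : Icc a B ∈ nhds t := Icc_mem_nhds hat (by linarith [ht.2])
    have hXd : HasDerivAt X (V t (X t)) t := (hX t ⟨ht.1, by linarith [ht.2]⟩).hasDerivAt hmem
    have hev : x =ᶠ[nhds t] X := by
      filter_upwards [Ioi_mem_nhds hat] with s hs
      exact hxX s (le_of_lt hs)
    have := hXd.congr_of_eventuallyEq hev
    rwa [hxX t ht.1]

end exist

lemma lip_pair {A : Type*} [NormedField A] (α β : A) (K : ℝ) (hK : 0 ≤ K)
    (hα : ‖α‖ ≤ K) (hβ : ‖β‖ ≤ K) :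
    LipschitzWith K.toNNReal (fun p : A × A => (α * p.2, -(β * p.1))) := by
  apply LipschitzWith.of_dist_le_mul
  intro p q
  rw [Prod.dist_eq, Prod.dist_eq, Real.coe_toNNReal _ hK]
  simp only [dist_eq_norm]
  have h2 : ‖α * p.2 - α * q.2‖ = ‖α‖ * ‖p.2 - q.2‖ := by rw [← mul_sub, norm_mul]
  have h1 : ‖-(β * p.1) - -(β * q.1)‖ = ‖β‖ * ‖p.1 - q.1‖ := by
    rw [← neg_sub', norm_neg, ← mul_sub, norm_mul]
  rw [h1, h2]
  have hp1 : ‖p.1 - q.1‖ ≤ max ‖p.1 - q.1‖ ‖p.2 - q.2‖ := le_max_left _ _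
  have hp2 : ‖p.2 - q.2‖ ≤ max ‖p.1 - q.1‖ ‖p.2 - q.2‖ := le_max_right _ _
  apply max_le
  · exact mul_le_mul hα hp2 (norm_nonneg _) hK
  · exact mul_le_mul hβ hp1 (norm_nonneg _) hK

/-- The complex Riccati equation `z' + f₁ z² + g₁ = 0` with `z(a) = i` has a solution on
all of `[a,b]`, with `Im z > 0`, and every nontrivial real solution `(φ,ψ)` of
`φ' = f₁ ψ, ψ' = -g₁ φ` has the representation
`φ(t) = (μ/√(Im z(t))) sin(∫_a^t f₁ (Im z) + θ)`. -/
theorem complex_riccati_representation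
    (a b : ℝ) (hab : a < b) (f₁ g₁ : ℝ → ℝ)
    (hf : ContinuousOn f₁ (Icc a b)) (hg : ContinuousOn g₁ (Icc a b)) :
    ∃ z : ℝ → ℂ,
      (∀ t ∈ Icc a b, HasDerivAt z (-((f₁ t : ℂ) * z t ^ 2 + (g₁ t : ℂ))) t) ∧
      z a = Complex.I ∧
      (∀ t ∈ Icc a b, 0 < (z t).im) ∧
      ∀ φ ψ : ℝ → ℝ,
        (∀ t ∈ Icc a b, HasDerivAt φ (f₁ t * ψ t) t) →
        (∀ t ∈ Icc a b, HasDerivAt ψ (-(g₁ t * φ t)) t) →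
        (∃ t ∈ Icc a b, φ t ≠ 0 ∨ ψ t ≠ 0) →
        ∃ μ θ : ℝ, μ ≠ 0 ∧ ∀ t ∈ Icc a b,
          φ t = μ / Real.sqrt ((z t).im) *
            Real.sin ((∫ τ in a..t, f₁ τ * (z τ).im) + θ) := by
  -- clamping
  have hable : a ≤ b := hab.le
  set cl : ℝ → ℝ := fun t => min (max t a) b with hcl
  have hclcont : Continuous cl := ((continuous_id.max continuous_const).min continuous_const)
  have hclmem : ∀ t, cl t ∈ Icc a b := fun t =>
    ⟨le_min (le_max_right t a) hable, min_le_right _ _⟩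
  have hcleq : ∀ t ∈ Icc a b, cl t = t := by
    intro t ht
    simp [hcl, max_eq_left ht.1, min_eq_left ht.2]
  set F : ℝ → ℝ := fun t => f₁ (cl t) with hF
  set G : ℝ → ℝ := fun t => g₁ (cl t) with hG
  have hFc : Continuous F := hf.comp_continuous hclcont hclmem
  have hGc : Continuous G := hg.comp_continuous hclcont hclmem
  have hFeq : ∀ t ∈ Icc a b, F t = f₁ t := fun t ht => by rw [hF]; simp [hcleq t ht]
  have hGeq : ∀ t ∈ Icc a b, G t = g₁ t := fun t ht => by rw [hG]; simp [hcleq t ht]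
  obtain ⟨Mf, hMf⟩ := isCompact_Icc.exists_bound_of_continuousOn hf
  obtain ⟨Mg, hMg⟩ := isCompact_Icc.exists_bound_of_continuousOn hg
  set K : ℝ := max Mf Mg with hK
  have hK0 : 0 ≤ K := le_trans (norm_nonneg (f₁ a)) (le_trans (hMf a ⟨le_rfl, hable⟩) (le_max_left _ _))
  have hFb : ∀ t, |F t| ≤ K := fun t => le_trans (hMf _ (hclmem t)) (le_max_left _ _)
  have hGb : ∀ t, |G t| ≤ K := fun t => le_trans (hMg _ (hclmem t)) (le_max_right _ _)
  -- complex vector field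
  set V : ℝ → ℂ × ℂ → ℂ × ℂ := fun t p => ((F t : ℂ) * p.2, -((G t : ℂ) * p.1)) with hV
  have hVlip : ∀ t, LipschitzWith K.toNNReal (V t) := by
    intro t
    apply lip_pair _ _ _ hK0 <;>
      rw [Complex.norm_real, Real.norm_eq_abs] <;> [exact hFb t; exact hGb t]
  have hVct : ∀ p, Continuous fun t => V t p := by
    intro p
    exact ((Complex.continuous_ofReal.comp hFc).mul continuous_const).prodMk
      (((Complex.continuous_ofReal.comp hGc).mul continuous_const).neg)
  have hVzero : ∀ t, V t 0 = 0 := fun t => by simp [hV]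
  obtain ⟨U, hU0, hU⟩ := linear_ode_exists V K hK0 hVlip hVct hVzero a b hab (1, Complex.I)
  set u : ℝ → ℂ := fun t => (U t).1 with hu_def
  set v : ℝ → ℂ := fun t => (U t).2 with hv_def
  have hu0 : u a = 1 := by simp [hu_def, hU0]
  have hv0 : v a = Complex.I := by simp [hv_def, hU0]
  have hu : ∀ t ∈ Icc a b, HasDerivAt u ((f₁ t : ℂ) * v t) t := by
    intro t ht
    have := (ContinuousLinearMap.fst ℝ ℂ ℂ).hasFDerivAt.comp_hasDerivAt t (hU t ht)
    simp [hV, hFeq t ht] at this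
    exact this
  have hv : ∀ t ∈ Icc a b, HasDerivAt v (-((g₁ t : ℂ) * u t)) t := by
    intro t ht
    have := (ContinuousLinearMap.snd ℝ ℂ ℂ).hasFDerivAt.comp_hasDerivAt t (hU t ht)
    simp [hV, hGeq t ht] at this
    exact this
  -- the invariant W = Im (v * conj u) is constant ≡ 1
  set W : ℝ → ℝ := fun t => (v t * (starRingEnd ℂ) (u t)).im with hW_def
  have hWd : ∀ t ∈ Icc a b, HasDerivAt W 0 t := by
    intro t ht
    have hconj : HasDerivAt (fun s => (starRingEnd ℂ) (u s))
        ((starRingEnd ℂ) ((f₁ t : ℂ) * v t)) t := by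
      have := Complex.conjCLE.toContinuousLinearMap.hasFDerivAt.comp_hasDerivAt t (hu t ht)
      simp at this
      simp only [map_mul, Complex.conj_ofReal]
      exact this
    have hmul := (hv t ht).mul hconj
    have him := Complex.imCLM.hasFDerivAt.comp_hasDerivAt t hmul
    have hval : (-((g₁ t : ℂ) * u t) * (starRingEnd ℂ) (u t)
        + v t * (starRingEnd ℂ) ((f₁ t : ℂ) * v t)).im = 0 := by
      simp only [map_mul, Complex.conj_ofReal]
      simp only [Complex.add_im, Complex.neg_im, Complex.neg_re, Complex.mul_im,
        Complex.mul_re, Complex.conj_re, Complex.conj_im, Complex.ofReal_re,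
        Complex.ofReal_im]
      ring
    simp only [Complex.imCLM_apply] at him
    rw [hval] at him
    apply him.congr_of_eventuallyEq
    filter_upwards with s
    simp [hW_def]
  have hWcont : ContinuousOn W (Icc a b) :=
    fun t ht => (hWd t ht).continuousAt.continuousWithinAt
  have hW1 : ∀ t ∈ Icc a b, W t = 1 := by
    intro t ht
    have := constant_of_has_deriv_right_zero hWcont
      (fun s hs => (hWd s (Ico_subset_Icc_self hs)).hasDerivWithinAt.mono (fun y hy => hy)) t ht
    rw [this, hW_def]
    simp [hu0, hv0]
  have hune : ∀ t ∈ Icc a b, u t ≠ 0 := by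
    intro t ht h0
    have := hW1 t ht
    rw [hW_def] at this
    simp only [h0, map_zero, mul_zero, Complex.zero_im] at this
    exact one_ne_zero this.symm
  -- the Riccati solution
  set z : ℝ → ℂ := fun t => v t / u t with hz_def
  have hz0 : z a = Complex.I := by simp [hz_def, hu0, hv0]
  have hnsq : ∀ t ∈ Icc a b, 0 < Complex.normSq (u t) :=
    fun t ht => Complex.normSq_pos.mpr (hune t ht)
  have him : ∀ t ∈ Icc a b, (z t).im = 1 / Complex.normSq (u t) := by
    intro t ht
    have hw := hW1 t ht
    rw [hW_def] at hw
    simp only [Complex.mul_im, Complex.conj_re, Complex.conj_im] at hw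
    rw [hz_def]
    simp only [Complex.div_im]
    rw [div_sub_div_same]
    congr 1
    linear_combination hw
  have himpos : ∀ t ∈ Icc a b, 0 < (z t).im := by
    intro t ht
    rw [him t ht]
    exact div_pos one_pos (hnsq t ht)
  have hzd : ∀ t ∈ Icc a b, HasDerivAt z (-((f₁ t : ℂ) * z t ^ 2 + (g₁ t : ℂ))) t := by
    intro t ht
    have := (hv t ht).div (hu t ht) (hune t ht)
    refine this.congr_deriv ?_
    symm
    simp only [hz_def]
    field_simp [hune t ht]
    ring
  -- exponential representation of u
  have hzcont : ContinuousOn z (Icc a b) :=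
    fun t ht => (hzd t ht).continuousAt.continuousWithinAt
  set fc : ℝ → ℂ := fun τ => (F τ : ℂ) * z (cl τ) with hfc_def
  have hfcc : Continuous fc :=
    (Complex.continuous_ofReal.comp hFc).mul (hzcont.comp_continuous hclcont hclmem)
  have hfc_eq : ∀ τ ∈ Icc a b, fc τ = (f₁ τ : ℂ) * z τ := by
    intro τ hτ
    rw [hfc_def]
    simp only [hFeq τ hτ, hcleq τ hτ]
  set Rc : ℝ → ℂ := fun t => ∫ τ in a..t, fc τ with hRc_def
  have hRcd : ∀ t, HasDerivAt Rc (fc t) t := by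
    intro t
    rw [hRc_def]
    have hint : IntervalIntegrable fc MeasureTheory.volume a t := hfcc.intervalIntegrable a t
    exact intervalIntegral.integral_hasDerivAt_right hint
      hfcc.stronglyMeasurable.stronglyMeasurableAtFilter hfcc.continuousAt
  set D : ℝ → ℂ := fun t => u t * Complex.exp (-Rc t) with hD_def
  have hDd : ∀ t ∈ Icc a b, HasDerivAt D 0 t := by
    intro t ht
    have hexp : HasDerivAt (fun s => Complex.exp (-Rc s))
        (Complex.exp (-Rc t) * -fc t) t := ((hRcd t).neg).cexp
    have htot := (hu t ht).mul hexp
    refine htot.congr_deriv ?_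
    symm
    rw [hfc_eq t ht]
    simp only [hz_def]
    field_simp [hune t ht]
    ring
  have hD1 : ∀ t ∈ Icc a b, D t = 1 := by
    intro t ht
    have hDcont : ContinuousOn D (Icc a b) :=
      fun s hs => (hDd s hs).continuousAt.continuousWithinAt
    have := constant_of_has_deriv_right_zero hDcont
      (fun s hs => (hDd s (Ico_subset_Icc_self hs)).hasDerivWithinAt.mono (fun y hy => hy)) t ht
    rw [this, hD_def]
    simp [hu0, hRc_def, intervalIntegral.integral_same]
  have huexp : ∀ t ∈ Icc a b, u t = Complex.exp (Rc t) := by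
    intro t ht
    have h := hD1 t ht
    rw [hD_def] at h
    simp only [Complex.exp_neg] at h
    field_simp [Complex.exp_ne_zero] at h
    exact h
  -- the imaginary part of Rc is the phase integral of the statement
  have hSim : ∀ t ∈ Icc a b, (Rc t).im = ∫ τ in a..t, f₁ τ * (z τ).im := by
    intro t ht
    have h1 : (∫ τ in a..t, (fc τ).im) = (Rc t).im := by
      have hint : IntervalIntegrable fc MeasureTheory.volume a t := hfcc.intervalIntegrable a t
      have := Complex.imCLM.intervalIntegral_comp_comm hint
      simpa [hRc_def] using this
    rw [← h1]
    apply intervalIntegral.integral_congr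
    intro τ hτ
    rw [uIcc_of_le ht.1] at hτ
    have hτm : τ ∈ Icc a b := ⟨hτ.1, le_trans hτ.2 ht.2⟩
    show (fc τ).im = f₁ τ * (z τ).im
    rw [hfc_eq τ hτm, Complex.im_ofReal_mul]
  have habs : ∀ t ∈ Icc a b, ‖u t‖ = Real.exp ((Rc t).re) := by
    intro t ht
    rw [huexp t ht, Complex.norm_exp]
  have hsqrt : ∀ t ∈ Icc a b, Real.sqrt ((z t).im) = (Real.exp ((Rc t).re))⁻¹ := by
    intro t ht
    rw [him t ht, Complex.normSq_eq_norm_sq, habs t ht, one_div, Real.sqrt_inv]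
    rw [Real.sqrt_sq (Real.exp_pos _).le]
  refine ⟨z, hzd, hz0, himpos, ?_⟩
  intro φ ψ hφ hψ hnt
  -- real vector field and uniqueness
  set Vr : ℝ → ℝ × ℝ → ℝ × ℝ := fun t p => (F t * p.2, -(G t * p.1)) with hVr
  have hVrlip : ∀ t, LipschitzWith K.toNNReal (Vr t) := by
    intro t
    apply lip_pair _ _ _ hK0 <;> rw [Real.norm_eq_abs] <;> [exact hFb t; exact hGb t]
  set c : ℂ := (φ a : ℂ) - (ψ a : ℂ) * Complex.I with hc_def
  set P : ℝ → ℝ × ℝ := fun t => (φ t, ψ t) with hP_def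
  set Q : ℝ → ℝ × ℝ := fun t => ((c * u t).re, (c * v t).re) with hQ_def
  have hQd : ∀ t ∈ Icc a b, HasDerivAt Q (Vr t (Q t)) t := by
    intro t ht
    have h1 : HasDerivAt (fun s => (c * u s).re) ((c * ((f₁ t : ℂ) * v t)).re) t := by
      have := Complex.reCLM.hasFDerivAt.comp_hasDerivAt t ((hu t ht).const_mul c)
      simp only [Function.comp_def, Complex.reCLM_apply] at this
      exact this
    have h2 : HasDerivAt (fun s => (c * v s).re) ((c * -((g₁ t : ℂ) * u t)).re) t := by
      have := Complex.reCLM.hasFDerivAt.comp_hasDerivAt t ((hv t ht).const_mul c)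
      simp only [Function.comp_def, Complex.reCLM_apply] at this
      exact this
    have he1 : (c * ((f₁ t : ℂ) * v t)).re = F t * (c * v t).re := by
      rw [hFeq t ht]
      rw [show c * ((f₁ t : ℂ) * v t) = (f₁ t : ℂ) * (c * v t) by ring]
      rw [Complex.re_ofReal_mul]
    have he2 : (c * -((g₁ t : ℂ) * u t)).re = -(G t * (c * u t).re) := by
      rw [hGeq t ht]
      rw [show c * -((g₁ t : ℂ) * u t) = -((g₁ t : ℂ) * (c * u t)) by ring]
      rw [Complex.neg_re, Complex.re_ofReal_mul]
    rw [he1] at h1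
    rw [he2] at h2
    exact h1.prodMk h2
  have hPd : ∀ t ∈ Icc a b, HasDerivAt P (Vr t (P t)) t := by
    intro t ht
    have := (hφ t ht).prodMk (hψ t ht)
    simpa [hVr, hP_def, hFeq t ht, hGeq t ht] using this
  have hPQa : P a = Q a := by
    rw [hP_def, hQ_def]
    simp only [hu0, hv0, mul_one]
    have h1 : c.re = φ a := by simp [hc_def]
    have h2 : (c * Complex.I).re = ψ a := by
      simp [hc_def, Complex.mul_re]
    rw [h1, h2]
  have hEq : EqOn P Q (Icc a b) := by
    apply ODE_solution_unique (v := Vr) (K := K.toNNReal) hVrlip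
      (fun t ht => (hPd t ht).continuousAt.continuousWithinAt)
      (fun t ht => (hPd t (Ico_subset_Icc_self ht)).hasDerivWithinAt.mono (fun y hy => hy))
      (fun t ht => (hQd t ht).continuousAt.continuousWithinAt)
      (fun t ht => (hQd t (Ico_subset_Icc_self ht)).hasDerivWithinAt.mono (fun y hy => hy))
      hPQa
  have hφrep : ∀ t ∈ Icc a b, φ t = (c * u t).re := by
    intro t ht
    have := hEq ht
    rw [hP_def, hQ_def] at this
    exact congrArg Prod.fst this
  have hψrep : ∀ t ∈ Icc a b, ψ t = (c * v t).re := by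
    intro t ht
    have := hEq ht
    rw [hP_def, hQ_def] at this
    exact congrArg Prod.snd this
  have hcne : c ≠ 0 := by
    intro h0
    obtain ⟨t, ht, hor⟩ := hnt
    rcases hor with h | h
    · exact h (by rw [hφrep t ht, h0, zero_mul, Complex.zero_re])
    · exact h (by rw [hψrep t ht, h0, zero_mul, Complex.zero_re])
  refine ⟨‖c‖, Complex.arg c + Real.pi / 2, norm_ne_zero_iff.mpr hcne, ?_⟩
  intro t ht
  rw [hφrep t ht, ← hSim t ht, hsqrt t ht, huexp t ht, div_inv_eq_mul]
  rw [show (Rc t).im + (Complex.arg c + Real.pi/2)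
      = ((Rc t).im + Complex.arg c) + Real.pi/2 by ring]
  rw [Real.sin_add_pi_div_two]
  conv_lhs => rw [← Complex.norm_mul_exp_arg_mul_I c]
  rw [mul_assoc, ← Complex.exp_add, Complex.re_ofReal_mul, Complex.exp_re]
  simp only [Complex.add_re, Complex.add_im, Complex.mul_re, Complex.mul_im,
    Complex.I_re, Complex.I_im, Complex.ofReal_re, Complex.ofReal_im]
  ring_nf
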